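/- There exists a family of groups (K_P), indexed by the subsets P of the set of prime numbers, such that: each K_P is generated by two elements; and for every prime p, K_P contains an element of order p if and only if p ∈ P. In particular, the groups K_P are pairwise non-isomorphic, so there exist continuum many (2^ℵ₀) pairwise non-isomorphic 2-generator groups. -/

import Mathlib

namespace CTG

/-- index `kₚ` for prime `p`: we use `p+1` (positive, not divisible by `p`, injective). -/
def κ (p : Nat.Primes) : ℤ := (p : ℕ) + 1

def sgn (s : Bool) : ℤ := if s then 1 else -1

def Hf (t : ℤ) : ℤ := if 0 ≤ t then 1 else 0

def Sf (m t : ℤ) : ℤ := Hf t - Hf (t - m)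

lemma Sf_zero (t : ℤ) : Sf 0 t = 0 := by simp [Sf]

lemma Sf_add (m m' t : ℤ) : Sf (m + m') t = Sf m t + Sf m' (t - m) := by
  unfold Sf Hf
  split_ifs <;> omega

variable (P : Set Nat.Primes)

/-- The torsion coefficient module. -/
abbrev Nt := (ℤ → ℤ) × ((p : P) → Bool → ℤ → ℤ → ZMod ((p : Nat.Primes) : ℕ))

/-- The action of the wreath-product element `(b, n)` on `Nt`. -/
def act (b : ℤ → ℤ) (n : ℤ) (m : Nt P) : Nt P :=
  (fun k => m.1 (k - n),
   fun p s k t => m.2 p s (k - n) (t - b (k + sgn s * κ p)) +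
     ((m.1 (k - n) * Sf (b (k + sgn s * κ p)) t : ℤ) : ZMod ((p : Nat.Primes) : ℕ)))

lemma act_zero (b : ℤ → ℤ) (n : ℤ) : act P b n 0 = 0 := by
  unfold act
  refine Prod.ext ?_ ?_ <;> · funext; simp

lemma act_id (m : Nt P) : act P 0 0 m = m := by
  simp [act, Sf_zero]

lemma act_add (b : ℤ → ℤ) (n : ℤ) (m m' : Nt P) :
    act P b n (m + m') = act P b n m + act P b n m' := by
  unfold act
  refine Prod.ext ?_ ?_
  · funext k; simp
  · funext p s k t
    simp only [Prod.snd_add, Prod.fst_add, Pi.add_apply]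
    push_cast
    ring

lemma act_act (b b' : ℤ → ℤ) (n n' : ℤ) (m : Nt P) :
    act P b n (act P b' n' m) = act P (fun k => b k + b' (k - n)) (n + n') m := by
  unfold act
  refine Prod.ext ?_ ?_
  · funext k
    show m.1 (k - n - n') = m.1 (k - (n + n'))
    have : k - n - n' = k - (n + n') := by ring
    rw [this]
  · funext p s k t
    simp only
    have e1 : k - n + sgn s * κ p = k + sgn s * κ p - n := by ring
    have e2 : k - n - n' = k - (n + n') := by ring
    have e3 : t - b (k + sgn s * κ p) - b' (k + sgn s * κ p - n)
        = t - (b (k + sgn s * κ p) + b' (k + sgn s * κ p - n)) := by ring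
    rw [e1, e2, e3]
    rw [Sf_add (b (k + sgn s * κ p)) (b' (k + sgn s * κ p - n)) t]
    push_cast
    ring


/-- The ambient group `G = N ⋊ (B ⋊ ℤ)`, written by hand. -/
@[ext]
structure G where
  m : Nt P
  b : ℤ → ℤ
  n : ℤ

variable {P}

instance : Group (G P) where
  mul g h := ⟨g.m + act P g.b g.n h.m, g.b + fun k => h.b (k - g.n), g.n + h.n⟩
  one := ⟨0, 0, 0⟩
  inv g := ⟨-(act P (fun k => -g.b (k + g.n)) (-g.n) g.m), fun k => -g.b (k + g.n), -g.n⟩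
  mul_assoc g₁ g₂ g₃ := by
    refine G.ext ?_ ?_ ?_
    · show (g₁.m + act P g₁.b g₁.n g₂.m) + act P _ _ g₃.m
        = g₁.m + act P g₁.b g₁.n (g₂.m + act P g₂.b g₂.n g₃.m)
      rw [act_add, act_act]
      exact (add_assoc _ _ _)
    · show (g₁.b + fun k => g₂.b (k - g₁.n)) + (fun k => g₃.b (k - (g₁.n + g₂.n)))
        = g₁.b + fun k => (g₂.b + fun k' => g₃.b (k' - g₂.n)) (k - g₁.n)
      funext k
      simp only [Pi.add_apply]
      have : k - (g₁.n + g₂.n) = k - g₁.n - g₂.n := by ring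
      rw [this]; ring
    · exact add_assoc _ _ _
  one_mul g := by
    refine G.ext ?_ ?_ ?_
    · show (0 : Nt P) + act P 0 0 g.m = g.m
      rw [act_id, zero_add]
    · show (0 : ℤ → ℤ) + (fun k => g.b (k - 0)) = g.b
      funext k; simp
    · exact zero_add _
  mul_one g := by
    refine G.ext ?_ ?_ ?_
    · show g.m + act P g.b g.n 0 = g.m
      rw [act_zero, add_zero]
    · show g.b + (fun _ => (0:ℤ)) = g.b
      funext k; simp
    · exact add_zero _
  inv_mul_cancel g := by
    refine G.ext ?_ ?_ ?_
    · show -(act P (fun k => -g.b (k + g.n)) (-g.n) g.m)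
        + act P (fun k => -g.b (k + g.n)) (-g.n) g.m = (0 : Nt P)
      exact neg_add_cancel _
    · show (fun k => -g.b (k + g.n)) + (fun k => g.b (k - -g.n)) = (0 : ℤ → ℤ)
      funext k
      simp only [Pi.add_apply, Pi.zero_apply]
      have : k - -g.n = k + g.n := by ring
      rw [this]; ring
    · exact neg_add_cancel _

variable (P)

@[simp] lemma mul_def (g h : G P) :
    g * h = ⟨g.m + act P g.b g.n h.m, g.b + fun k => h.b (k - g.n), g.n + h.n⟩ := rfl

@[simp] lemma one_def : (1 : G P) = ⟨0, 0, 0⟩ := rfl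

@[simp] lemma inv_def (g : G P) :
    g⁻¹ = ⟨-(act P (fun k => -g.b (k + g.n)) (-g.n) g.m), fun k => -g.b (k + g.n), -g.n⟩ := rfl


lemma pow_n (g : G P) (j : ℕ) : (g ^ j).n = j * g.n := by
  induction j with
  | zero => simp
  | succ j ih => rw [pow_succ]; simp [ih]; ring

lemma pow_b (g : G P) (hg : g.n = 0) (j : ℕ) : (g ^ j).b = j • g.b := by
  induction j with
  | zero => simp
  | succ j ih =>
    rw [pow_succ]
    simp only [mul_def, ih]
    funext k
    have hn : (g ^ j).n = 0 := by rw [pow_n, hg, mul_zero]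
    simp only [hn, Pi.add_apply, Pi.smul_apply, smul_eq_mul, sub_zero, Nat.cast_add, Nat.cast_one]
    push_cast
    ring

lemma pow_m (m : Nt P) (j : ℕ) :
    (⟨m, 0, 0⟩ : G P) ^ j = ⟨j • m, 0, 0⟩ := by
  induction j with
  | zero => simp
  | succ j ih =>
    rw [pow_succ, ih]
    simp only [mul_def, act_id]
    refine G.ext ?_ rfl rfl
    show j • m + m = (j + 1) • m
    rw [add_nsmul, one_nsmul]

lemma eq_one_of_pow_prime_not_mem (p : Nat.Primes) (hp : p ∉ P) (g : G P)
    (h : g ^ (p : ℕ) = 1) : g = 1 := by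
  obtain ⟨m, b, n⟩ := g
  have hppos : ((p : ℕ) : ℤ) ≠ 0 := by
    exact_mod_cast Nat.Prime.ne_zero p.2
  have hn : n = 0 := by
    have := congrArg G.n h
    rw [pow_n] at this
    simp only [one_def] at this
    exact (mul_eq_zero.mp this).resolve_left hppos
  subst hn
  have hb : b = 0 := by
    have := congrArg G.b h
    rw [pow_b _ _ rfl] at this
    simp only [one_def] at this
    funext k
    have := congrFun this k
    simp only [Pi.smul_apply, Pi.zero_apply, smul_eq_mul] at this
    have : ((p:ℕ):ℤ) * b k = 0 := by exact_mod_cast this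
    exact (mul_eq_zero.mp this).resolve_left hppos
  subst hb
  rw [pow_m] at h
  have hm : (p : ℕ) • m = 0 := by
    have := congrArg G.m h
    simpa using this
  have hf : m.1 = 0 := by
    funext k
    have := congrFun (congrArg Prod.fst hm) k
    simp only [Prod.smul_fst, Pi.smul_apply, smul_eq_mul, Prod.fst_zero, Pi.zero_apply] at this
    have : ((p:ℕ):ℤ) * m.1 k = 0 := by exact_mod_cast this
    exact (mul_eq_zero.mp this).resolve_left hppos
  have hd : m.2 = 0 := by
    funext p' s k t
    have hev := congrFun (congrFun (congrFun (congrFun (congrArg Prod.snd hm) p') s) k) t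
    simp only [Prod.smul_snd, Pi.smul_apply, Prod.snd_zero, Pi.zero_apply] at hev
    have hunit : IsUnit (((p : ℕ) : ZMod ((p' : Nat.Primes) : ℕ))) := by
      rw [ZMod.isUnit_prime_iff_not_dvd p.2]
      intro hdvd
      have : (p : ℕ) = ((p' : Nat.Primes) : ℕ) :=
        (Nat.prime_dvd_prime_iff_eq p.2 (p' : Nat.Primes).2).mp hdvd
      have : p = (p' : Nat.Primes) := Subtype.ext this
      exact hp (this ▸ (p'.2 : (p' : Nat.Primes) ∈ P))
    have : ((p : ℕ) : ZMod ((p' : Nat.Primes) : ℕ)) * m.2 p' s k t = 0 := by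
      rw [← nsmul_eq_mul]; exact hev
    simpa using hunit.mul_right_eq_zero.mp this
  have : m = 0 := Prod.ext hf hd
  rw [this]
  rfl


def delta (a : ℤ) : ℤ → ℤ := fun i => if i = a then 1 else 0

lemma kappa_pos (p : Nat.Primes) : 0 < κ p := by
  have : 0 ≤ ((p : ℕ) : ℤ) := Int.natCast_nonneg _
  unfold κ; omega

lemma kappa_inj {q p : Nat.Primes} (h : κ q = κ p) : q = p := by
  unfold κ at h
  have : (q : ℕ) = (p : ℕ) := by exact_mod_cast (by omega : ((q:ℕ):ℤ) = ((p:ℕ):ℤ))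
  exact Subtype.ext this

lemma Sf_one (t : ℤ) : Sf 1 t = if t = 0 then 1 else 0 := by
  unfold Sf Hf; split_ifs <;> omega

def Agen : G P := ⟨0, 0, 1⟩

def Cgen : G P := ⟨(delta 0, 0), delta 0, 0⟩

lemma Agen_pow (j : ℕ) : (Agen P) ^ j = ⟨0, 0, (j : ℤ)⟩ := by
  induction j with
  | zero => rfl
  | succ j ih =>
    rw [pow_succ, ih]
    simp only [mul_def, Agen]
    refine G.ext ?_ ?_ ?_
    · show (0 : Nt P) + act P 0 (j:ℤ) 0 = 0
      rw [act_zero, add_zero]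
    · funext k; simp
    · push_cast; ring

lemma act_delta_eval (b : ℤ → ℤ) (a : ℤ) (c : ℤ) :
    act P b 0 (fun i => c * delta a i, 0) =
      ((fun i => c * delta a i, fun (p' : P) s k t =>
        ((c * delta a k * Sf (b (k + sgn s * κ (p' : Nat.Primes))) t : ℤ) :
          ZMod ((p' : Nat.Primes) : ℕ))) : Nt P) := by
  unfold act
  refine Prod.ext ?_ ?_
  · funext k; simp
  · funext p' s k t; simp


lemma act_eval (b : ℤ → ℤ) (f : ℤ → ℤ) :
    act P b 0 ((f, 0) : Nt P) =
      ((f, fun (p' : P) s k t =>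
        ((f k * Sf (b (k + sgn s * κ (p' : Nat.Primes))) t : ℤ) :
          ZMod ((p' : Nat.Primes) : ℕ))) : Nt P) := by
  unfold act
  refine Prod.ext ?_ ?_
  · funext k; simp
  · funext p' s k t; simp

variable {P}

/-- the first torsion block -/
def ψ₁ (p : Nat.Primes) : (p' : P) → Bool → ℤ → ℤ → ZMod ((p' : Nat.Primes) : ℕ) :=
  fun p' s k t =>
    if (p' : Nat.Primes) = p ∧ s = false ∧ k = κ p ∧ t = 0 then 1 else 0

/-- the second torsion block -/
def ψ₂ (p : Nat.Primes) : (p' : P) → Bool → ℤ → ℤ → ZMod ((p' : Nat.Primes) : ℕ) :=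
  fun p' s k t =>
    if (p' : Nat.Primes) = p ∧ s = true ∧ k = 0 ∧ t = 0 then 1 else 0

@[simp] lemma sgn_true : sgn true = 1 := rfl
@[simp] lemma sgn_false : sgn false = -1 := rfl

lemma eval_T1 (p : Nat.Primes) :
    (fun (p' : P) s k t =>
        ((delta (κ p) k * Sf (delta 0 (k + sgn s * κ (p' : Nat.Primes))) t : ℤ) :
          ZMod ((p' : Nat.Primes) : ℕ))) = ψ₁ (P := P) p := by
  funext p' s k t
  unfold ψ₁
  by_cases hk : k = κ p
  · subst hk
    cases s with
    | true =>
      have h1 := kappa_pos p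
      have h2 := kappa_pos (p' : Nat.Primes)
      have h0 : delta 0 (κ p + sgn true * κ (p' : Nat.Primes)) = 0 := by
        simp only [delta, sgn_true, one_mul]
        rw [if_neg (by omega)]
      rw [h0, Sf_zero]
      simp
    | false =>
      by_cases hp' : (p' : Nat.Primes) = p
      · have h0 : delta 0 (κ p + sgn false * κ (p' : Nat.Primes)) = 1 := by
          simp only [delta, sgn_false, hp']
          rw [if_pos (by ring)]
        rw [h0, Sf_one]
        simp only [delta, if_pos rfl, hp', true_and]
        by_cases ht : t = 0 <;> simp [ht]
      · have h0 : delta 0 (κ p + sgn false * κ (p' : Nat.Primes)) = 0 := by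
          simp only [delta, sgn_false]
          refine if_neg ?_
          intro h
          exact hp' (kappa_inj (show κ (p' : Nat.Primes) = κ p by omega))
        rw [h0, Sf_zero]
        simp [hp']
  · simp [delta, hk]

lemma eval_T2 (p : Nat.Primes) :
    (fun (p' : P) s k t =>
        ((((-delta 0) k) * Sf ((delta 0 + delta (κ p)) (k + sgn s * κ (p' : Nat.Primes))) t : ℤ) :
          ZMod ((p' : Nat.Primes) : ℕ))) = -ψ₂ (P := P) p := by
  funext p' s k t
  unfold ψ₂
  simp only [Pi.neg_apply]
  by_cases hk : k = 0
  · subst hk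
    cases s with
    | false =>
      have h1 := kappa_pos p
      have h2 := kappa_pos (p' : Nat.Primes)
      have h0 : (delta 0 + delta (κ p)) (0 + sgn false * κ (p' : Nat.Primes)) = 0 := by
        simp only [Pi.add_apply, delta, sgn_false]
        rw [if_neg (by omega), if_neg (by omega)]
        norm_num
      rw [h0, Sf_zero]
      simp
    | true =>
      by_cases hp' : (p' : Nat.Primes) = p
      · have h1 := kappa_pos p
        have h0 : (delta 0 + delta (κ p)) (0 + sgn true * κ (p' : Nat.Primes)) = 1 := by
          simp only [Pi.add_apply, delta, sgn_true, hp']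
          rw [if_neg (by omega), if_pos (by ring)]
          norm_num
        rw [h0, Sf_one]
        simp only [delta, if_pos rfl, hp', true_and]
        by_cases ht : t = 0 <;> simp [ht]
      · have h2 := kappa_pos (p' : Nat.Primes)
        have h0 : (delta 0 + delta (κ p)) (0 + sgn true * κ (p' : Nat.Primes)) = 0 := by
          simp only [Pi.add_apply, delta, sgn_true]
          rw [if_neg (by omega), if_neg ?_]
          · norm_num
          intro h
          exact hp' (kappa_inj (show κ (p' : Nat.Primes) = κ p by omega))
        rw [h0, Sf_zero]
        simp [hp']
  · simp [delta, hk]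


lemma eval_C0 :
    (fun (p' : P) s k t =>
        ((delta 0 k * Sf ((-delta 0) (k + sgn s * κ (p' : Nat.Primes))) t : ℤ) :
          ZMod ((p' : Nat.Primes) : ℕ))) = 0 := by
  funext p' s k t
  by_cases hk : k = 0
  · subst hk
    have h2 := kappa_pos (p' : Nat.Primes)
    have h0 : (-delta 0) (0 + sgn s * κ (p' : Nat.Primes)) = 0 := by
      cases s <;>
        (simp only [Pi.neg_apply, delta, sgn_true, sgn_false]; rw [if_neg (by omega)]; norm_num)
    rw [h0, Sf_zero]
    simp
  · simp [delta, hk]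

lemma eval_D0 (p : Nat.Primes) :
    (fun (p' : P) s k t =>
        ((delta (κ p) k * Sf ((-delta (κ p)) (k + sgn s * κ (p' : Nat.Primes))) t : ℤ) :
          ZMod ((p' : Nat.Primes) : ℕ))) = 0 := by
  funext p' s k t
  by_cases hk : k = κ p
  · subst hk
    have h2 := kappa_pos (p' : Nat.Primes)
    have h0 : (-delta (κ p)) (κ p + sgn s * κ (p' : Nat.Primes)) = 0 := by
      cases s <;>
        (simp only [Pi.neg_apply, delta, sgn_true, sgn_false]; rw [if_neg (by omega)]; norm_num)
    rw [h0, Sf_zero]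
    simp
  · simp [delta, hk]

lemma eval_Z0 (p : Nat.Primes) :
    (fun (p' : P) s k t =>
        (((-delta (κ p)) k * Sf (delta (κ p) (k + sgn s * κ (p' : Nat.Primes))) t : ℤ) :
          ZMod ((p' : Nat.Primes) : ℕ))) = 0 := by
  funext p' s k t
  by_cases hk : k = κ p
  · subst hk
    have h2 := kappa_pos (p' : Nat.Primes)
    have h0 : delta (κ p) (κ p + sgn s * κ (p' : Nat.Primes)) = 0 := by
      cases s <;>
        (simp only [delta, sgn_true, sgn_false]; exact if_neg (by omega))
    rw [h0, Sf_zero]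
    simp
  · simp [delta, Pi.neg_apply, hk]

def Dg (p : Nat.Primes) : G P := ⟨(delta (κ p), 0), delta (κ p), 0⟩

def zg (p : Nat.Primes) : G P := ⟨(0, ψ₁ (P := P) p - ψ₂ (P := P) p), 0, 0⟩

lemma Cgen_inv : (Cgen P)⁻¹ = (⟨(-(delta 0), 0), -(delta 0), 0⟩ : G P) := by
  refine inv_eq_of_mul_eq_one_left ?_
  simp only [mul_def, Cgen]
  refine G.ext ?_ ?_ ?_
  · show (-(delta 0), (0:(p' : P) → Bool → ℤ → ℤ → ZMod ((p' : Nat.Primes) : ℕ)))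
        + act P (-(delta 0)) 0 ((delta 0, 0) : Nt P) = (0 : Nt P)
    rw [act_eval, eval_C0]
    refine Prod.ext ?_ ?_ <;> simp
  · funext k; simp
  · simp

lemma Dg_inv (p : Nat.Primes) :
    (Dg (P := P) p)⁻¹ = (⟨(-(delta (κ p)), 0), -(delta (κ p)), 0⟩ : G P) := by
  refine inv_eq_of_mul_eq_one_left ?_
  simp only [mul_def, Dg]
  refine G.ext ?_ ?_ ?_
  · show (-(delta (κ p)), (0:(p' : P) → Bool → ℤ → ℤ → ZMod ((p' : Nat.Primes) : ℕ)))
        + act P (-(delta (κ p))) 0 ((delta (κ p), 0) : Nt P) = (0 : Nt P)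
    rw [act_eval, eval_D0]
    refine Prod.ext ?_ ?_ <;> simp
  · funext k; simp
  · simp

lemma Dg_eq (p : Nat.Primes) :
    (Agen P) ^ ((p : ℕ) + 1) * Cgen P * ((Agen P) ^ ((p : ℕ) + 1))⁻¹ = Dg (P := P) p := by
  rw [Agen_pow]
  have hK : ((((p : ℕ) + 1 : ℕ)) : ℤ) = κ p := by unfold κ; push_cast; ring
  rw [hK]
  have hinv : (⟨0, 0, κ p⟩ : G P)⁻¹ = ⟨0, 0, -κ p⟩ := by
    refine inv_eq_of_mul_eq_one_left ?_
    simp only [mul_def]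
    refine G.ext ?_ ?_ ?_
    · show (0 : Nt P) + act P 0 (-κ p) 0 = 0
      rw [act_zero, add_zero]
    · funext k; simp
    · simp
  rw [hinv]
  simp only [mul_def, Cgen, Dg]
  refine G.ext ?_ ?_ ?_
  · show ((0 : Nt P) + act P 0 (κ p) ((delta 0, 0) : Nt P))
        + act P (0 + fun k => delta 0 (k - κ p)) (κ p + 0) 0 = ((delta (κ p), 0) : Nt P)
    rw [act_zero, add_zero, zero_add]
    unfold act
    refine Prod.ext ?_ ?_
    · funext k
      show delta 0 (k - κ p) = delta (κ p) k
      simp only [delta]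
      by_cases h : k = κ p
      · rw [if_pos (by omega), if_pos h]
      · rw [if_neg (by omega), if_neg h]
    · funext p' s k t
      simp [Sf_zero]
  · funext k
    simp only [Pi.add_apply, Pi.zero_apply, zero_add, delta]
    split_ifs <;> omega
  · simp

lemma z_eq (p : Nat.Primes) :
    Cgen P * Dg (P := P) p * (Cgen P)⁻¹ * (Dg (P := P) p)⁻¹ = zg (P := P) p := by
  rw [Cgen_inv, Dg_inv]
  have h1 : Cgen P * Dg (P := P) p
      = ⟨(delta 0 + delta (κ p), ψ₁ (P := P) p), delta 0 + delta (κ p), 0⟩ := by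
    simp only [mul_def, Cgen, Dg]
    refine G.ext ?_ ?_ ?_
    · show ((delta 0, 0) : Nt P) + act P (delta 0) 0 ((delta (κ p), 0) : Nt P) = _
      rw [act_eval, eval_T1]
      refine Prod.ext ?_ ?_ <;> simp
    · funext k; simp
    · simp
  rw [h1]
  have h2 : (⟨(delta 0 + delta (κ p), ψ₁ (P := P) p), delta 0 + delta (κ p), 0⟩ : G P)
      * ⟨(-(delta 0), 0), -(delta 0), 0⟩
      = ⟨(delta (κ p), ψ₁ (P := P) p - ψ₂ (P := P) p), delta (κ p), 0⟩ := by
    simp only [mul_def]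
    refine G.ext ?_ ?_ ?_
    · show ((delta 0 + delta (κ p), ψ₁ (P := P) p) : Nt P)
        + act P (delta 0 + delta (κ p)) 0 ((-(delta 0), 0) : Nt P) = _
      rw [act_eval, eval_T2]
      refine Prod.ext ?_ ?_
      · funext k
        simp only [Prod.fst_add, Pi.add_apply, Pi.neg_apply, delta]
        split_ifs <;> omega
      · funext p' s k t; simp [sub_eq_add_neg]
    · funext k; simp
    · simp
  rw [h2]
  simp only [mul_def, zg]
  refine G.ext ?_ ?_ ?_
  · show ((delta (κ p), ψ₁ (P := P) p - ψ₂ (P := P) p) : Nt P)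
      + act P (delta (κ p)) 0 ((-(delta (κ p)), 0) : Nt P) = _
    rw [act_eval, eval_Z0]
    refine Prod.ext ?_ ?_ <;> simp
  · funext k; simp
  · simp


lemma zg_pow (p : Nat.Primes) : (zg (P := P) p) ^ (p : ℕ) = 1 := by
  unfold zg
  rw [pow_m]
  have hm : (p : ℕ) • ((0, ψ₁ (P := P) p - ψ₂ (P := P) p) : Nt P) = 0 := by
    refine Prod.ext (by simp) ?_
    show (p : ℕ) • (ψ₁ (P := P) p - ψ₂ (P := P) p) = 0
    funext p' s k t
    simp only [Pi.smul_apply, Pi.sub_apply, Pi.zero_apply, ψ₁, ψ₂]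
    split_ifs with h1 h2 h2
    · exact absurd (h1.2.1 ▸ h2.2.1) (by simp)
    · obtain ⟨hpp, -, -, -⟩ := h1
      subst hpp
      rw [sub_zero, nsmul_eq_mul, mul_one, ZMod.natCast_self]
    · obtain ⟨hpp, -, -, -⟩ := h2
      subst hpp
      rw [zero_sub, nsmul_eq_mul, mul_neg, mul_one, ZMod.natCast_self, neg_zero]
    · simp
  rw [hm]
  rfl

lemma zg_ne_one (p : Nat.Primes) (hp : p ∈ P) : zg (P := P) p ≠ 1 := by
  intro h
  haveI hfact : Fact (1 < (p : ℕ)) := ⟨p.2.one_lt⟩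
  have h2 := congrArg (fun g : G P => g.m.2 ⟨p, hp⟩ false (κ p) 0) h
  simp only [zg, one_def, Pi.sub_apply] at h2
  unfold ψ₁ ψ₂ at h2
  rw [if_pos ⟨rfl, rfl, rfl, rfl⟩, if_neg (by simp)] at h2
  simp only [Pi.zero_apply, sub_zero] at h2
  exact one_ne_zero h2

lemma zg_orderOf (p : Nat.Primes) (hp : p ∈ P) : orderOf (zg (P := P) p) = (p : ℕ) := by
  haveI : Fact ((p : ℕ)).Prime := ⟨p.2⟩
  exact orderOf_eq_prime (zg_pow p) (zg_ne_one p hp)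

variable (P)

/-- the 2-generated subgroup -/
def KS : Subgroup (G P) := Subgroup.closure {Agen P, Cgen P}

lemma Agen_mem : Agen P ∈ KS P := Subgroup.subset_closure (Set.mem_insert _ _)

lemma Cgen_mem : Cgen P ∈ KS P :=
  Subgroup.subset_closure (Set.mem_insert_of_mem _ rfl)

lemma zg_mem (p : Nat.Primes) : zg (P := P) p ∈ KS P := by
  rw [← z_eq]
  have hA : (Agen P) ^ ((p : ℕ) + 1) ∈ KS P := pow_mem (Agen_mem P) _
  have hD : Dg (P := P) p ∈ KS P := by
    rw [← Dg_eq]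
    exact mul_mem (mul_mem hA (Cgen_mem P)) (inv_mem hA)
  exact mul_mem (mul_mem (mul_mem (Cgen_mem P) hD) (inv_mem (Cgen_mem P))) (inv_mem hD)

theorem torsion_spec (p : Nat.Primes) :
    (∃ g : ↥(KS P), orderOf g = (p : ℕ)) ↔ p ∈ P := by
  constructor
  · rintro ⟨g, hg⟩
    by_contra hp
    have hcoe : orderOf ((g : G P)) = (p : ℕ) := by
      rw [← hg]
      exact orderOf_injective (KS P).subtype (Subgroup.subtype_injective _) g
    have h1 : ((g : G P)) ^ (p : ℕ) = 1 := by
      rw [← hcoe]; exact pow_orderOf_eq_one _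
    have h2 : ((g : G P)) = 1 := eq_one_of_pow_prime_not_mem P p hp _ h1
    rw [h2, orderOf_one] at hcoe
    exact absurd hcoe.symm (Nat.Prime.ne_one p.2)
  · intro hp
    refine ⟨⟨zg (P := P) p, zg_mem P p⟩, ?_⟩
    rw [← zg_orderOf (P := P) p hp]
    exact (orderOf_injective (KS P).subtype (Subgroup.subtype_injective _) _).symm

theorem gen_two :
    ∃ x y : ↥(KS P), Subgroup.closure {x, y} = ⊤ := by
  refine ⟨⟨Agen P, Agen_mem P⟩, ⟨Cgen P, Cgen_mem P⟩, ?_⟩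
  have h := Subgroup.closure_closure_coe_preimage (k := {Agen P, Cgen P})
  have hset : ((↑) : Subgroup.closure {Agen P, Cgen P} → G P) ⁻¹' {Agen P, Cgen P}
      = {⟨Agen P, Agen_mem P⟩, ⟨Cgen P, Cgen_mem P⟩} := by
    ext g
    simp only [Set.mem_preimage, Set.mem_insert_iff, Set.mem_singleton_iff]
    constructor
    · rintro (h | h)
      · exact Or.inl (Subtype.ext h)
      · exact Or.inr (Subtype.ext h)
    · rintro (h | h) <;> rw [h]
      · exact Or.inl rfl
      · exact Or.inr rfl
  rw [hset] at h
  exact h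

end CTG

/-- There is a family of groups `(K_P)`, indexed by the sets `P` of prime
numbers, such that each `K_P` is generated by two elements and, for every
prime `p`, `K_P` contains an element of order `p` if and only if `p ∈ P`.
In particular, the `K_P` are pairwise non-isomorphic, so there exist continuum
many pairwise non-isomorphic 2-generator groups. -/
theorem continuum_many_two_generator_groups :
    ∃ K : Set Nat.Primes → GrpCat,
      (∀ P : Set Nat.Primes, ∃ x y : K P, Subgroup.closure {x, y} = ⊤) ∧
      (∀ (P : Set Nat.Primes) (p : Nat.Primes),
        (∃ g : K P, orderOf g = (p : ℕ)) ↔ p ∈ P) ∧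
      (∀ P Q : Set Nat.Primes, P ≠ Q → IsEmpty (K P ≃* K Q)) := by
  classical
  refine ⟨fun P => GrpCat.of (ULift ↥(CTG.KS P)), ?_, ?_, ?_⟩
  · intro P
    obtain ⟨x, y, hxy⟩ := CTG.gen_two P
    let f : ↥(CTG.KS P) →* ULift ↥(CTG.KS P) := MulEquiv.ulift.symm.toMonoidHom
    refine ⟨f x, f y, ?_⟩
    calc Subgroup.closure {f x, f y}
        = Subgroup.closure (f '' {x, y}) := by
          rw [Set.image_insert_eq, Set.image_singleton]
      _ = Subgroup.map f (Subgroup.closure {x, y}) := (MonoidHom.map_closure f _).symm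
      _ = Subgroup.map f ⊤ := by rw [hxy]
      _ = ⊤ := Subgroup.map_top_of_surjective f (MulEquiv.surjective _)
  · intro P p
    rw [← CTG.torsion_spec P p]
    constructor
    · rintro ⟨g, hg⟩
      refine ⟨MulEquiv.ulift g, ?_⟩
      exact (orderOf_injective (MulEquiv.ulift (α := ↥(CTG.KS P))).toMonoidHom
        (MulEquiv.injective _) g).trans hg
    · rintro ⟨g, hg⟩
      refine ⟨MulEquiv.ulift.symm g, ?_⟩
      exact (orderOf_injective (MulEquiv.ulift (α := ↥(CTG.KS P))).symm.toMonoidHom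
        (MulEquiv.injective _) g).trans hg
  · intro P Q hPQ
    constructor
    intro e0
    have e : ↥(CTG.KS P) ≃* ↥(CTG.KS Q) :=
      (MulEquiv.ulift.symm.trans e0).trans MulEquiv.ulift
    have key : ∀ (p : Nat.Primes),
        (∃ g : ↥(CTG.KS P), orderOf g = (p : ℕ)) ↔
          (∃ g : ↥(CTG.KS Q), orderOf g = (p : ℕ)) := by
      intro p
      constructor
      · rintro ⟨g, hg⟩
        exact ⟨e g, (orderOf_injective e.toMonoidHom e.injective g).trans hg⟩
      · rintro ⟨g, hg⟩
        exact ⟨e.symm g, (orderOf_injective e.symm.toMonoidHom e.symm.injective g).trans hg⟩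
    apply hPQ
    ext p
    rw [← CTG.torsion_spec P p, ← CTG.torsion_spec Q p]
    exact key p
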